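/- The function φ(σ) = (Σ_{i=1}^{ℓ} ā_i²/(λ̄_i + σ)²)^{−1/2} − 1/δ is strictly increasing and concave on the open interval (−λ̄_1, ∞). -/

import Mathlib

section Aux

variable {l : ℕ} {lb a : Fin (l + 1) → ℝ}

/-- Derivative of a single term `aᵢ² / (λᵢ + σ)^k`. -/
lemma secular_term_hasDerivAt (k : ℕ) (i : Fin (l + 1)) (σ : ℝ) (ht : lb i + σ ≠ 0) :
    HasDerivAt (fun σ => a i ^ 2 / (lb i + σ) ^ k)
      (-(k : ℝ) * (a i ^ 2 / (lb i + σ) ^ (k + 1))) σ := by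
  have h1 : HasDerivAt (fun σ : ℝ => lb i + σ) 1 σ := (hasDerivAt_id σ).const_add _
  have h2 := h1.fun_pow k
  have h3 := (hasDerivAt_const σ (a i ^ 2)).fun_div h2 (pow_ne_zero k ht)
  refine h3.congr_deriv ?_
  rcases k with _ | k
  · simp
  · have : (Nat.succ k) - 1 = k := rfl
    rw [Nat.add_sub_cancel]
    field_simp
    ring

/-- Derivative of the sum `S k σ = ∑ aᵢ²/(λᵢ+σ)^k`. -/
lemma secular_sum_hasDerivAt (k : ℕ) (σ : ℝ) (ht : ∀ i, lb i + σ ≠ 0) :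
    HasDerivAt (fun σ => ∑ i, a i ^ 2 / (lb i + σ) ^ k)
      (-(k : ℝ) * ∑ i, a i ^ 2 / (lb i + σ) ^ (k + 1)) σ := by
  rw [Finset.mul_sum]
  exact HasDerivAt.fun_sum fun i _ => secular_term_hasDerivAt k i σ (ht i)

end Aux

/-- Let `λ̄₁ < ⋯ < λ̄_ℓ` (here `ℓ = l + 1 ≥ 1`), let `ā₁,…,ā_ℓ` be
nonzero reals, and `δ > 0`.  Then the secular function
`φ(σ) = (∑ᵢ āᵢ²/(λ̄ᵢ + σ)²)^{-1/2} - 1/δ` is strictly increasing and concave on the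
open interval `(-λ̄₁, ∞)`. -/
theorem secular_function_strictMono_concave
    (l : ℕ) (lb : Fin (l + 1) → ℝ) (hlb : StrictMono lb)
    (a : Fin (l + 1) → ℝ) (ha : ∀ i, a i ≠ 0) (δ : ℝ) (hδ : 0 < δ)
    (φ : ℝ → ℝ)
    (hφ : ∀ σ, φ σ = 1 / Real.sqrt (∑ i, a i ^ 2 / (lb i + σ) ^ 2) - 1 / δ) :
    StrictMonoOn φ (Set.Ioi (-lb 0)) ∧ ConcaveOn ℝ (Set.Ioi (-lb 0)) φ := by
  have hφfun : φ = fun σ => 1 / Real.sqrt (∑ i, a i ^ 2 / (lb i + σ) ^ 2) - 1 / δ := funext hφ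
  subst hφfun
  set φ : ℝ → ℝ := fun σ => 1 / Real.sqrt (∑ i, a i ^ 2 / (lb i + σ) ^ 2) - 1 / δ with hφ2
  set S : ℕ → ℝ → ℝ := fun k σ => ∑ i, a i ^ 2 / (lb i + σ) ^ k with hSdef
  -- positivity of the shifted eigenvalues on the interval
  have ht : ∀ σ ∈ Set.Ioi (-lb 0), ∀ i, 0 < lb i + σ := by
    intro σ hσ i
    have h0 : lb 0 ≤ lb i := hlb.monotone (Fin.zero_le i)
    have : -lb 0 < σ := hσ
    linarith
  have hSpos : ∀ k, ∀ σ ∈ Set.Ioi (-lb 0), 0 < S k σ := by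
    intro k σ hσ
    apply Finset.sum_pos
    · intro i _
      exact div_pos (pow_pos (abs_pos.mpr (ha i)) 2 |>.trans_eq (by rw [sq_abs]))
        (pow_pos (ht σ hσ i) k)
    · exact Finset.univ_nonempty
  -- first derivative
  set D : ℝ → ℝ := fun σ => S 3 σ / (S 2 σ * Real.sqrt (S 2 σ)) with hDdef
  have hD : ∀ σ ∈ Set.Ioi (-lb 0), HasDerivAt φ (D σ) σ := by
    intro σ hσ
    have hu : 0 < S 2 σ := hSpos 2 σ hσ
    have hs : 0 < Real.sqrt (S 2 σ) := Real.sqrt_pos.mpr hu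
    have h2 : HasDerivAt (S 2) (-(2 : ℝ) * S 3 σ) σ := by
      have := secular_sum_hasDerivAt (lb := lb) (a := a) 2 σ (fun i => (ht σ hσ i).ne')
      norm_num at this ⊢
      exact this
    have hsq := h2.sqrt hu.ne'
    have hinv := hsq.inv hs.ne'
    have hder := hinv.sub_const (1 / δ)
    have hfun : φ = fun x => (Real.sqrt (S 2 x))⁻¹ - 1 / δ := by
      rw [hφ2]; funext x; rw [one_div]
    rw [hfun]
    refine hder.congr_deriv ?_
    simp only [hDdef]
    set s := Real.sqrt (S 2 σ) with hsdef
    have hs2 : s ^ 2 = S 2 σ := Real.sq_sqrt hu.le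
    have hsne : s ≠ 0 := hs.ne'
    rw [← hs2]
    field_simp
  have hDpos : ∀ σ ∈ Set.Ioi (-lb 0), 0 < D σ := by
    intro σ hσ
    exact div_pos (hSpos 3 σ hσ)
      (mul_pos (hSpos 2 σ hσ) (Real.sqrt_pos.mpr (hSpos 2 σ hσ)))
  have hcont : ContinuousOn φ (Set.Ioi (-lb 0)) := fun σ hσ =>
    ((hD σ hσ).differentiableAt.continuousAt).continuousWithinAt
  constructor
  · -- strict monotonicity
    apply strictMonoOn_of_deriv_pos (convex_Ioi _) hcont
    intro x hx
    rw [interior_Ioi] at hx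
    rw [(hD x hx).deriv]
    exact hDpos x hx
  · -- concavity
    set D2 : ℝ → ℝ := fun σ =>
      3 * (S 3 σ ^ 2 - S 2 σ * S 4 σ) / (S 2 σ ^ 2 * Real.sqrt (S 2 σ)) with hD2def
    have hD2 : ∀ σ ∈ Set.Ioi (-lb 0), HasDerivAt D (D2 σ) σ := by
      intro σ hσ
      have hu : 0 < S 2 σ := hSpos 2 σ hσ
      have hs : 0 < Real.sqrt (S 2 σ) := Real.sqrt_pos.mpr hu
      have h2 : HasDerivAt (S 2) (-(2 : ℝ) * S 3 σ) σ := by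
        have := secular_sum_hasDerivAt (lb := lb) (a := a) 2 σ (fun i => (ht σ hσ i).ne')
        norm_num at this ⊢; exact this
      have h3 : HasDerivAt (S 3) (-(3 : ℝ) * S 4 σ) σ := by
        have := secular_sum_hasDerivAt (lb := lb) (a := a) 3 σ (fun i => (ht σ hσ i).ne')
        norm_num at this ⊢; exact this
      have hsq := h2.sqrt hu.ne'
      have hw := h2.fun_mul hsq
      have hdiv := h3.fun_div hw (mul_ne_zero hu.ne' hs.ne')
      refine hdiv.congr_deriv ?_
      simp only [hD2def]
      set s := Real.sqrt (S 2 σ) with hsdef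
      have hs2 : s ^ 2 = S 2 σ := Real.sq_sqrt hu.le
      have hsne : s ≠ 0 := hs.ne'
      rw [← hs2]
      field_simp
      ring
    have hD2nonpos : ∀ σ ∈ Set.Ioi (-lb 0), D2 σ ≤ 0 := by
      intro σ hσ
      have hu : 0 < S 2 σ := hSpos 2 σ hσ
      have hs : 0 < Real.sqrt (S 2 σ) := Real.sqrt_pos.mpr hu
      have hCS : S 3 σ ^ 2 ≤ S 2 σ * S 4 σ := by
        have key := Finset.sum_mul_sq_le_sq_mul_sq Finset.univ
          (fun i => a i / (lb i + σ)) (fun i => a i / (lb i + σ) ^ 2)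
        have e1 : ∀ i : Fin (l + 1),
            (a i / (lb i + σ)) * (a i / (lb i + σ) ^ 2) = a i ^ 2 / (lb i + σ) ^ 3 := by
          intro i; have := (ht σ hσ i).ne'; field_simp
        have e2 : ∀ i : Fin (l + 1), (a i / (lb i + σ)) ^ 2 = a i ^ 2 / (lb i + σ) ^ 2 := by
          intro i; rw [div_pow]
        have e3 : ∀ i : Fin (l + 1), (a i / (lb i + σ) ^ 2) ^ 2 = a i ^ 2 / (lb i + σ) ^ 4 := by
          intro i; rw [div_pow, ← pow_mul]
        calc S 3 σ ^ 2 = (∑ i, (a i / (lb i + σ)) * (a i / (lb i + σ) ^ 2)) ^ 2 := by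
              rw [hSdef]; congr 1; exact Finset.sum_congr rfl fun i _ => (e1 i).symm
          _ ≤ (∑ i, (a i / (lb i + σ)) ^ 2) * ∑ i, (a i / (lb i + σ) ^ 2) ^ 2 := key
          _ = S 2 σ * S 4 σ := by
              rw [hSdef]; congr 1
              · exact Finset.sum_congr rfl fun i _ => e2 i
              · exact Finset.sum_congr rfl fun i _ => e3 i
      rw [hD2def]
      apply div_nonpos_of_nonpos_of_nonneg
      · nlinarith
      · positivity
    have hint : interior (Set.Ioi (-lb 0)) = Set.Ioi (-lb 0) := interior_Ioi
    refine concaveOn_of_hasDerivWithinAt2_nonpos (f' := D) (f'' := D2) (convex_Ioi _) hcont ?_ ?_ ?_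
    · intro x hx; rw [hint] at hx ⊢; exact (hD x hx).hasDerivWithinAt
    · intro x hx; rw [hint] at hx ⊢; exact (hD2 x hx).hasDerivWithinAt
    · intro x hx; rw [hint] at hx; exact hD2nonpos x hx
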